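/- Let s ≥ 3, let G be a graph with m edges, let n and a be positive integers, and let Γ be a graph on n vertices with the following two properties: (i) every subgraph of the complete graph K_n isomorphic to G contains at least a edges of Γ, and (ii) for every subgraph of K_n isomorphic to G, the maximum number of pairwise edge-disjoint s-cliques of Γ that each share at least one edge with that subgraph is strictly less than a / C(s,2), where C(s,2) = s(s−1)/2. Then r(K_s, G) > n; indeed, removing from Γ the edges of a maximal family of pairwise edge-disjoint s-cliques yields a graph with no K_s whose complement contains no copy of G. -/

import Mathlib

open SimpleGraph

/-- `G.ContainsCopy H` means the graph `G` contains a subgraph isomorphic to `H`,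
i.e. there is an injective graph homomorphism from `H` into `G`. -/
def SimpleGraph.ContainsCopy {α β : Type*} (G : SimpleGraph α) (H : SimpleGraph β) : Prop :=
  ∃ f : H →g G, Function.Injective f

/-- `RamseyProp n H G` : every graph `Γ` on `n` vertices contains a copy of `H`,
or its complement contains a copy of `G`. -/
def RamseyProp {α β : Type*} (n : ℕ) (H : SimpleGraph α) (G : SimpleGraph β) : Prop :=
  ∀ Γ : SimpleGraph (Fin n), Γ.ContainsCopy H ∨ Γᶜ.ContainsCopy G

/-- The Ramsey number `r(H, G)` : the least positive `n` such that every graph on `n`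
vertices contains a copy of `H` or its complement contains a copy of `G`. -/
noncomputable def ramseyNumber {α β : Type*} (H : SimpleGraph α) (G : SimpleGraph β) : ℕ :=
  sInf {n : ℕ | 0 < n ∧ RamseyProp n H G}


lemma ramsey_aux : ∀ s t : ℕ, ∃ N : ℕ, ∀ (V : Type) [DecidableEq V]
    (Γ : SimpleGraph V) (A : Finset V), N ≤ A.card →
    (∃ S ⊆ A, Γ.IsNClique s S) ∨ (∃ S ⊆ A, Γᶜ.IsNClique t S) := by
  intro s
  induction s with
  | zero =>
    intro t
    exact ⟨0, fun V _ Γ A _ => Or.inl ⟨∅, by simp, by simp [isNClique_empty]⟩⟩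
  | succ s ihs =>
    intro t
    induction t with
    | zero =>
      exact ⟨0, fun V _ Γ A _ => Or.inr ⟨∅, by simp, by simp [isNClique_empty]⟩⟩
    | succ t iht =>
      obtain ⟨N₁, hN₁⟩ := ihs (t + 1)
      obtain ⟨N₂, hN₂⟩ := iht
      refine ⟨N₁ + N₂ + 1, fun V _ Γ A hA => ?_⟩
      classical
      obtain ⟨v, hv⟩ : ∃ v, v ∈ A := Finset.card_pos.mp (by omega)
      set A' := A.erase v with hA'
      have hcard : N₁ + N₂ ≤ A'.card := by
        rw [hA', Finset.card_erase_of_mem hv]; omega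
      set B := A'.filter (fun x => Γ.Adj v x) with hB
      set C := A'.filter (fun x => ¬ Γ.Adj v x) with hC
      have hBC : B.card + C.card = A'.card := Finset.card_filter_add_card_filter_not _
      by_cases hb : N₁ ≤ B.card
      · rcases hN₁ V Γ B hb with ⟨S, hSB, hS⟩ | ⟨S, hSB, hS⟩
        · refine Or.inl ⟨insert v S, ?_, ?_⟩
          · intro x hx
            rcases Finset.mem_insert.mp hx with rfl | hx
            · exact hv
            · exact Finset.erase_subset _ _ (Finset.filter_subset _ _ (hSB hx))
          · have hvS : v ∉ S := fun h => (Finset.mem_erase.mp (Finset.filter_subset _ _ (hSB h))).1 rfl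
            refine hS.insert fun x hx => ?_
            exact Finset.mem_filter.mp (hSB hx) |>.2
        · exact Or.inr ⟨S, hSB.trans ((Finset.filter_subset _ _).trans (Finset.erase_subset _ _)), hS⟩
      · have hc : N₂ ≤ C.card := by omega
        rcases hN₂ V Γ C hc with ⟨S, hSC, hS⟩ | ⟨S, hSC, hS⟩
        · exact Or.inl ⟨S, hSC.trans ((Finset.filter_subset _ _).trans (Finset.erase_subset _ _)), hS⟩
        · refine Or.inr ⟨insert v S, ?_, ?_⟩
          · intro x hx
            rcases Finset.mem_insert.mp hx with rfl | hx
            · exact hv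
            · exact Finset.erase_subset _ _ (Finset.filter_subset _ _ (hSC hx))
          · refine hS.insert fun x hx => ?_
            have hm := Finset.mem_filter.mp (hSC hx)
            have hne : v ≠ x := fun h => (Finset.mem_erase.mp hm.1).1 h.symm
            exact ⟨hne, hm.2⟩

lemma contains_of_clique {V β : Type} [Fintype β] (Δ : SimpleGraph V) (H : SimpleGraph β)
    (S : Finset V) (hS : Δ.IsNClique (Fintype.card β) S) : Δ.ContainsCopy H := by
  have hc : Fintype.card β = Fintype.card S := by
    rw [Fintype.card_coe, hS.2]
  classical
  obtain e := Fintype.equivOfCardEq hc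
  refine ⟨⟨fun b => (e b : V), fun {x y} hxy => ?_⟩, fun x y hxy => ?_⟩
  · exact hS.1 (e x).2 (e y).2 (fun h => H.ne_of_adj hxy (e.injective (Subtype.ext h)))
  · exact e.injective (Subtype.ext hxy)

lemma ramseyProp_mono {α β : Type*} (H : SimpleGraph α) (G : SimpleGraph β) {k n : ℕ}
    (h : k ≤ n) (hk : RamseyProp k H G) : RamseyProp n H G := by
  intro Γ
  rcases hk (Γ.comap (Fin.castLE h)) with ⟨g, hg⟩ | ⟨g, hg⟩
  · exact Or.inl ⟨⟨fun x => Fin.castLE h (g x), fun {a b} hab => g.map_adj hab⟩,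
      fun x y hxy => hg ((Fin.castLE_injective h) hxy)⟩
  · refine Or.inr ⟨⟨fun x => Fin.castLE h (g x), fun {a b} hab => ?_⟩,
      fun x y hxy => hg ((Fin.castLE_injective h) hxy)⟩
    have := g.map_adj hab
    rw [compl_adj] at this ⊢
    exact ⟨fun hh => this.1 ((Fin.castLE_injective h) hh), fun hh => this.2 (by simpa using hh)⟩

section
variable {β : Type} [Fintype β] {n : ℕ}

lemma part2 (s : ℕ) (hs : 3 ≤ s) (G : SimpleGraph β) (a : ℕ) (ha : 0 < a)
    (Γ : SimpleGraph (Fin n))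
    (h1 : ∀ f : β → Fin n, Function.Injective f →
      a ≤ ((Sym2.map f '' G.edgeSet) ∩ Γ.edgeSet).ncard)
    (h2 : ∀ f : β → Fin n, Function.Injective f →
      ∀ 𝒞 : Finset (Finset (Fin n)),
        (∀ S ∈ 𝒞, Γ.IsNClique s S ∧ ∃ e ∈ Sym2.map f '' G.edgeSet, ∀ x ∈ e, x ∈ S) →
        (∀ S ∈ 𝒞, ∀ T ∈ 𝒞, S ≠ T → (S ∩ T).card ≤ 1) →
        (𝒞.card : ℝ) < (a : ℝ) / (s.choose 2))
    (𝒞 : Finset (Finset (Fin n)))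
    (hcl : ∀ S ∈ 𝒞, Γ.IsNClique s S)
    (hdisj : ∀ S ∈ 𝒞, ∀ T ∈ 𝒞, S ≠ T → (S ∩ T).card ≤ 1)
    (hmax : ∀ S : Finset (Fin n), Γ.IsNClique s S → S ∉ 𝒞 → ∃ T ∈ 𝒞, 2 ≤ (S ∩ T).card) :
    (Γ.deleteEdges {e | ∃ S ∈ 𝒞, ∀ x ∈ e, x ∈ S}).CliqueFree s ∧
      ¬ ∃ f : G →g (Γ.deleteEdges {e | ∃ S ∈ 𝒞, ∀ x ∈ e, x ∈ S})ᶜ, Function.Injective f := by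
  classical
  set D : Set (Sym2 (Fin n)) := {e | ∃ S ∈ 𝒞, ∀ x ∈ e, x ∈ S} with hD
  set Γ' := Γ.deleteEdges D with hΓ'
  have hadj : ∀ x y, Γ'.Adj x y ↔ Γ.Adj x y ∧ s(x, y) ∉ D := by
    intro x y; rw [hΓ', deleteEdges_adj]
  have hCF : Γ'.CliqueFree s := by
    intro S hS
    have hSΓ : Γ.IsNClique s S :=
      ⟨fun x hx y hy hxy => ((hadj x y).mp (hS.1 hx hy hxy)).1, hS.2⟩
    have hedge : ∃ x ∈ S, ∃ y ∈ S, x ≠ y ∧ s(x, y) ∈ D := by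
      by_cases hSc : S ∈ 𝒞
      · obtain ⟨x, hx, y, hy, hxy⟩ := Finset.one_lt_card.mp (by rw [hS.2]; omega)
        exact ⟨x, hx, y, hy, hxy, ⟨S, hSc, fun z hz => by
          rcases Sym2.mem_iff.mp hz with rfl | rfl <;> assumption⟩⟩
      · obtain ⟨T, hT, hTc⟩ := hmax S hSΓ hSc
        obtain ⟨x, hx, y, hy, hxy⟩ := Finset.one_lt_card.mp (show 1 < (S ∩ T).card by omega)
        have hx' := Finset.mem_inter.mp hx
        have hy' := Finset.mem_inter.mp hy
        exact ⟨x, hx'.1, y, hy'.1, hxy, ⟨T, hT, fun z hz => by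
          rcases Sym2.mem_iff.mp hz with rfl | rfl
          exacts [hx'.2, hy'.2]⟩⟩
    obtain ⟨x, hx, y, hy, hxy, hmem⟩ := hedge
    exact ((hadj x y).mp (hS.1 hx hy hxy)).2 hmem
  refine ⟨hCF, ?_⟩
  rintro ⟨f, hf⟩
  have h1' := h1 f hf
  set Efin : Finset (Sym2 (Fin n)) :=
    Γ.edgeFinset.filter (fun e => e ∈ Sym2.map (⇑f) '' G.edgeSet) with hEfin
  have hEeq : (Sym2.map (⇑f) '' G.edgeSet) ∩ Γ.edgeSet = ↑Efin := by
    ext e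
    simp only [hEfin, Finset.coe_filter, Set.mem_setOf_eq, Set.mem_inter_iff, mem_edgeFinset]
    tauto
  rw [hEeq, Set.ncard_coe_finset] at h1'
  -- every edge of Efin is inside some clique of 𝒞
  have hcover : ∀ e ∈ Efin, ∃ S ∈ 𝒞, ∀ x ∈ e, x ∈ S := by
    intro e he
    obtain ⟨heΓ, e₀, he₀, rfl⟩ := by
      simpa only [hEfin, Finset.mem_filter, mem_edgeFinset, Set.mem_image] using he
    induction e₀ using Sym2.ind with
    | _ u v =>
      have hG : G.Adj u v := he₀
      have hcompl : Γ'ᶜ.Adj (f u) (f v) := f.map_adj hG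
      have hΓuv : Γ.Adj (f u) (f v) := by
        rwa [Sym2.map_pair_eq, mem_edgeSet] at heΓ
      have : ¬ Γ'.Adj (f u) (f v) := ((compl_adj _ _ _).mp hcompl).2
      have hDin : s(f u, f v) ∈ D := by
        by_contra hno
        exact this ((hadj _ _).mpr ⟨hΓuv, hno⟩)
      obtain ⟨S, hS, hall⟩ := hDin
      refine ⟨S, hS, ?_⟩
      rw [Sym2.map_pair_eq]
      exact hall
  set 𝒞' : Finset (Finset (Fin n)) :=
    𝒞.filter (fun S => ∃ e ∈ Efin, ∀ x ∈ e, x ∈ S) with h𝒞'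
  have hlt := h2 f hf 𝒞' (fun S hS => by
      obtain ⟨hS𝒞, e, he, hcond⟩ := Finset.mem_filter.mp hS
      exact ⟨hcl S hS𝒞, e, (Finset.mem_filter.mp he).2, hcond⟩)
    (fun S hS T hT => hdisj S (Finset.filter_subset _ _ hS) T (Finset.filter_subset _ _ hT))
  -- counting
  have hsub : Efin ⊆ 𝒞'.biUnion (fun S => Γ.edgeFinset.filter (fun e => ∀ x ∈ e, x ∈ S)) := by
    intro e he
    obtain ⟨S, hS𝒞, hcond⟩ := hcover e he
    have hS𝒞' : S ∈ 𝒞' := Finset.mem_filter.mpr ⟨hS𝒞, e, he, hcond⟩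
    refine Finset.mem_biUnion.mpr ⟨S, hS𝒞', Finset.mem_filter.mpr ⟨?_, hcond⟩⟩
    exact Finset.mem_of_mem_filter e he
  have hperS : ∀ S ∈ 𝒞', (Γ.edgeFinset.filter (fun e => ∀ x ∈ e, x ∈ S)).card ≤ s.choose 2 := by
    intro S hS
    have hcard : S.card = s := (hcl S (Finset.filter_subset _ _ hS)).2
    calc (Γ.edgeFinset.filter (fun e => ∀ x ∈ e, x ∈ S)).card
        ≤ (S.offDiag.image Sym2.mk.uncurry).card := by
          apply Finset.card_le_card
          intro e he
          obtain ⟨heΓ, hcond⟩ := Finset.mem_filter.mp he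
          rw [mem_edgeFinset] at heΓ
          induction e using Sym2.ind with
          | _ u v =>
            exact Finset.mem_image.mpr ⟨(u, v), Finset.mem_offDiag.mpr
              ⟨hcond u (Sym2.mem_mk_left u v), hcond v (Sym2.mem_mk_right u v),
                ((mem_edgeSet Γ).mp heΓ).ne⟩, rfl⟩
      _ = s.choose 2 := by rw [Sym2.card_image_offDiag, hcard]
  have hcount : Efin.card ≤ 𝒞'.card * s.choose 2 := by
    calc Efin.card ≤ (𝒞'.biUnion (fun S => Γ.edgeFinset.filter (fun e => ∀ x ∈ e, x ∈ S))).card :=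
          Finset.card_le_card hsub
      _ ≤ ∑ S ∈ 𝒞', (Γ.edgeFinset.filter (fun e => ∀ x ∈ e, x ∈ S)).card :=
          Finset.card_biUnion_le
      _ ≤ ∑ _S ∈ 𝒞', s.choose 2 := Finset.sum_le_sum hperS
      _ = 𝒞'.card * s.choose 2 := by rw [Finset.sum_const, smul_eq_mul]
  have hchoose : 0 < s.choose 2 := Nat.choose_pos (by omega)
  rw [lt_div_iff₀ (by exact_mod_cast hchoose)] at hlt
  have : (𝒞'.card * s.choose 2 : ℝ) < a := by exact_mod_cast hlt
  have : (𝒞'.card * s.choose 2 : ℕ) < a := by exact_mod_cast this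
  omega

end

theorem stmt_8 {β : Type} [Fintype β] (s : ℕ) (hs : 3 ≤ s)
    (G : SimpleGraph β) (m : ℕ) (hm : G.edgeSet.ncard = m)
    (n a : ℕ) (hn : 0 < n) (ha : 0 < a)
    (Γ : SimpleGraph (Fin n))
    -- (i) every subgraph of `K_n` isomorphic to `G` contains at least `a` edges of `Γ`
    (h1 : ∀ f : β → Fin n, Function.Injective f →
      a ≤ ((Sym2.map f '' G.edgeSet) ∩ Γ.edgeSet).ncard)
    -- (ii) for every copy of `G`, every family of pairwise edge-disjoint `s`-cliques of `Γ`,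
    -- each sharing an edge with the copy, has fewer than `a / C(s,2)` members
    (h2 : ∀ f : β → Fin n, Function.Injective f →
      ∀ 𝒞 : Finset (Finset (Fin n)),
        (∀ S ∈ 𝒞, Γ.IsNClique s S ∧ ∃ e ∈ Sym2.map f '' G.edgeSet, ∀ x ∈ e, x ∈ S) →
        (∀ S ∈ 𝒞, ∀ T ∈ 𝒞, S ≠ T → (S ∩ T).card ≤ 1) →
        (𝒞.card : ℝ) < (a : ℝ) / (s.choose 2)) :
    n < ramseyNumber (⊤ : SimpleGraph (Fin s)) G ∧
    -- removing a maximal family of pairwise edge-disjoint `s`-cliques from `Γ` yields a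
    -- `K_s`-free graph whose complement contains no copy of `G`
    ∀ 𝒞 : Finset (Finset (Fin n)),
      (∀ S ∈ 𝒞, Γ.IsNClique s S) →
      (∀ S ∈ 𝒞, ∀ T ∈ 𝒞, S ≠ T → (S ∩ T).card ≤ 1) →
      (∀ S : Finset (Fin n), Γ.IsNClique s S → S ∉ 𝒞 → ∃ T ∈ 𝒞, 2 ≤ (S ∩ T).card) →
      (Γ.deleteEdges {e | ∃ S ∈ 𝒞, ∀ x ∈ e, x ∈ S}).CliqueFree s ∧
      ¬ (Γ.deleteEdges {e | ∃ S ∈ 𝒞, ∀ x ∈ e, x ∈ S})ᶜ.ContainsCopy G := by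
  classical
  -- part 2 first, as a reusable fact
  have HP2 : ∀ 𝒞 : Finset (Finset (Fin n)),
      (∀ S ∈ 𝒞, Γ.IsNClique s S) →
      (∀ S ∈ 𝒞, ∀ T ∈ 𝒞, S ≠ T → (S ∩ T).card ≤ 1) →
      (∀ S : Finset (Fin n), Γ.IsNClique s S → S ∉ 𝒞 → ∃ T ∈ 𝒞, 2 ≤ (S ∩ T).card) →
      (Γ.deleteEdges {e | ∃ S ∈ 𝒞, ∀ x ∈ e, x ∈ S}).CliqueFree s ∧
      ¬ (Γ.deleteEdges {e | ∃ S ∈ 𝒞, ∀ x ∈ e, x ∈ S})ᶜ.ContainsCopy G :=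
    fun 𝒞 hcl hdisj hmax => part2 s hs G a ha Γ h1 h2 𝒞 hcl hdisj hmax
  refine ⟨?_, HP2⟩
  -- construct a maximal edge-disjoint family of s-cliques of Γ
  set P : Finset (Finset (Fin n)) → Prop := fun 𝒞 =>
    (∀ S ∈ 𝒞, Γ.IsNClique s S) ∧ (∀ S ∈ 𝒞, ∀ T ∈ 𝒞, S ≠ T → (S ∩ T).card ≤ 1) with hP
  set 𝒮 : Finset (Finset (Finset (Fin n))) := Finset.univ.filter P with h𝒮
  have hne : 𝒮.Nonempty := ⟨∅, by simp [h𝒮, hP]⟩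
  obtain ⟨𝒞₀, h𝒞₀mem, h𝒞₀max'⟩ := Finset.exists_maximal hne
  have h𝒞₀max : ∀ y ∈ 𝒮, ¬ 𝒞₀ < y := fun y hy hlt => not_le_of_gt hlt (h𝒞₀max' hy hlt.le)
  obtain ⟨hcl₀, hdisj₀⟩ : P 𝒞₀ := (Finset.mem_filter.mp h𝒞₀mem).2
  have hmax₀ : ∀ S : Finset (Fin n), Γ.IsNClique s S → S ∉ 𝒞₀ → ∃ T ∈ 𝒞₀, 2 ≤ (S ∩ T).card := by
    intro S hS hSnot
    by_contra hno
    push_neg at hno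
    have hP' : P (insert S 𝒞₀) := by
      constructor
      · intro T hT
        rcases Finset.mem_insert.mp hT with rfl | hT
        · exact hS
        · exact hcl₀ T hT
      · intro T₁ hT₁ T₂ hT₂ hne'
        rcases Finset.mem_insert.mp hT₁ with h₁ | h₁ <;>
          rcases Finset.mem_insert.mp hT₂ with h₂ | h₂
        · exact absurd (h₁.trans h₂.symm) hne'
        · subst h₁; exact Nat.lt_succ_iff.mp (hno T₂ h₂)
        · subst h₂; rw [Finset.inter_comm]; exact Nat.lt_succ_iff.mp (hno T₁ h₁)
        · exact hdisj₀ T₁ h₁ T₂ h₂ hne'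
    have : 𝒞₀ < insert S 𝒞₀ := Finset.ssubset_insert hSnot
    exact h𝒞₀max (insert S 𝒞₀) (Finset.mem_filter.mpr ⟨Finset.mem_univ _, hP'⟩) this
  obtain ⟨hCF, hNC⟩ := HP2 𝒞₀ hcl₀ hdisj₀ hmax₀
  -- Γ' refutes RamseyProp n
  have hnotR : ¬ RamseyProp n (⊤ : SimpleGraph (Fin s)) G := by
    intro hR
    rcases hR (Γ.deleteEdges {e | ∃ S ∈ 𝒞₀, ∀ x ∈ e, x ∈ S}) with ⟨g, hg⟩ | hcopy
    · exact (SimpleGraph.cliqueFree_iff.mp hCF).elim ⟨g, hg⟩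
    · exact hNC hcopy
  -- the Ramsey set is nonempty by Ramsey's theorem
  obtain ⟨N, hN⟩ := ramsey_aux s (Fintype.card β)
  have hmem : (N + 1) ∈ {k : ℕ | 0 < k ∧ RamseyProp k (⊤ : SimpleGraph (Fin s)) G} := by
    refine ⟨Nat.succ_pos _, fun Γ₀ => ?_⟩
    rcases hN (Fin (N + 1)) Γ₀ Finset.univ (by simp) with ⟨S, _, hS⟩ | ⟨S, _, hS⟩
    · exact Or.inl (contains_of_clique Γ₀ ⊤ S (by simpa using hS))
    · exact Or.inr (contains_of_clique Γ₀ᶜ G S hS)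
  -- conclude
  by_contra hle
  push_neg at hle
  have hsInf := Nat.sInf_mem ⟨N + 1, hmem⟩
  exact hnotR (ramseyProp_mono _ _ hle hsInf.2)
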